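/- Let R = R(m_0,2,0) be the Lie algebra with basis {x, y, e_1, e_2, ...} and nonzero brackets [e_i, e_1] = e_{i+1} (i ≥ 2), [e_1, x] = e_1, [e_i, x] = (i-1)e_i (i ≥ 2), [e_i, y] = e_i (i ≥ 2), with antisymmetric counterparts and [x,y] = 0. Then the center of R is trivial and every derivation of R is inner. -/

import Mathlib

noncomputable section

/-- The underlying space; coordinate 0 is `x`, coordinate 1 is `y`, and
coordinate `n ≥ 2` is the basis vector `e_{n-1}` (so `e_i = single (i+1)`). -/
abbrev V : Type := ℕ →₀ ℂ

/-- `e_i ↦ e_{i+1}` for `i ≥ 2` (`single n ↦ single (n+1)` for `n ≥ 3`), else 0. -/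
def T : V →ₗ[ℂ] V :=
  Finsupp.lsum ℂ fun n => if 3 ≤ n then (Finsupp.lsingle (n + 1) : ℂ →ₗ[ℂ] V) else 0

/-- Right multiplication by `x`: `e_1 ↦ e_1`, `e_i ↦ (i-1) e_i` for `i ≥ 2`. -/
def A : V →ₗ[ℂ] V :=
  Finsupp.lsum ℂ fun n =>
    (if n = 2 then (1 : ℂ) else if 3 ≤ n then (n : ℂ) - 2 else 0) • Finsupp.lsingle n

/-- Right multiplication by `y`: `e_i ↦ e_i` for `i ≥ 2`, else 0. -/
def B : V →ₗ[ℂ] V :=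
  Finsupp.lsum ℂ fun n => if 3 ≤ n then (Finsupp.lsingle n : ℂ →ₗ[ℂ] V) else 0

/-- Lie bracket of `R(m₀,2,0)`: nonzero brackets `[e_i,e_1] = e_{i+1}` (i ≥ 2),
`[e_1,x] = e_1`, `[e_i,x] = (i-1)e_i` (i ≥ 2), `[e_i,y] = e_i` (i ≥ 2), with
antisymmetric counterparts, and `[x,y] = 0`. -/
def brR (f g : V) : V :=
  g 2 • T f - f 2 • T g + g 0 • A f - f 0 • A g + g 1 • B f - f 1 • B g

lemma T_single (n : ℕ) (c : ℂ) : T (Finsupp.single n c) = if 3 ≤ n then Finsupp.single (n+1) c else 0 := by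
  simp [T]
  split <;> simp

lemma T_apply (g : V) (k : ℕ) : T g k = if 4 ≤ k then g (k-1) else 0 := by
  induction g using Finsupp.induction_linear with
  | zero => simp
  | add f g hf hg => simp [hf, hg]; split <;> simp
  | single n c =>
    rw [T_single]
    rcases le_or_gt 3 n with h | h
    · rw [if_pos h]
      simp only [Finsupp.single_apply]
      split_ifs <;> first | rfl | omega
    · rw [if_neg (by omega)]
      simp only [Finsupp.coe_zero, Pi.zero_apply, Finsupp.single_apply]
      split_ifs <;> first | rfl | omega

def cA (k : ℕ) : ℂ := if k = 2 then 1 else if 3 ≤ k then (k:ℂ) - 2 else 0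

lemma A_single (n : ℕ) (c : ℂ) : A (Finsupp.single n c) = cA n • Finsupp.single n c := by
  simp only [A, Finsupp.lsum_single, LinearMap.smul_apply, Finsupp.lsingle_apply, cA]

lemma A_apply (g : V) (k : ℕ) : A g k = cA k * g k := by
  induction g using Finsupp.induction_linear with
  | zero => simp
  | add f g hf hg => simp [hf, hg]; ring
  | single n c =>
    rw [A_single]
    simp only [Finsupp.smul_apply, Finsupp.single_apply, smul_eq_mul]
    split_ifs with h
    · subst h; rfl
    · simp

lemma B_single (n : ℕ) (c : ℂ) : B (Finsupp.single n c) = if 3 ≤ n then Finsupp.single n c else 0 := by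
  simp [B]; split <;> simp

lemma B_apply (g : V) (k : ℕ) : B g k = if 3 ≤ k then g k else 0 := by
  induction g using Finsupp.induction_linear with
  | zero => simp
  | add f g hf hg => simp [hf, hg]; split <;> simp
  | single n c =>
    rw [B_single]
    rcases le_or_gt 3 n with h | h
    · rw [if_pos h]
      simp only [Finsupp.single_apply]
      split_ifs <;> first | rfl | omega
    · rw [if_neg (by omega)]
      simp only [Finsupp.coe_zero, Pi.zero_apply, Finsupp.single_apply]
      split_ifs <;> first | rfl | omega

lemma brR_apply (f g : V) (k : ℕ) : brR f g k =
    g 2 * (if 4 ≤ k then f (k-1) else 0) - f 2 * (if 4 ≤ k then g (k-1) else 0)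
    + g 0 * (cA k * f k) - f 0 * (cA k * g k)
    + g 1 * (if 3 ≤ k then f k else 0) - f 1 * (if 3 ≤ k then g k else 0) := by
  simp [brR, T_apply, A_apply, B_apply]

@[simp] lemma cA_0 : cA 0 = 0 := rfl
@[simp] lemma cA_1 : cA 1 = 0 := rfl
@[simp] lemma cA_2 : cA 2 = 1 := rfl
lemma cA_ge {k : ℕ} (h : 3 ≤ k) : cA k = (k:ℂ) - 2 := by
  unfold cA; rw [if_neg (by omega), if_pos h]

lemma cA_ne {k : ℕ} (hk : 2 ≤ k) : cA k ≠ 0 := by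
  rcases eq_or_lt_of_le hk with h | h
  · rw [← h]; norm_num
  · rw [cA_ge h]
    have : (k:ℂ) ≠ 2 := by exact_mod_cast (by omega : k ≠ 2)
    exact sub_ne_zero_of_ne this

lemma brR_antisymm (f g : V) : brR f g = - brR g f := by
  ext k; simp only [brR_apply, Finsupp.neg_apply]; ring

lemma brR_s0 (f : V) (k : ℕ) : brR f (Finsupp.single 0 1) k = cA k * f k := by
  rw [brR_apply]
  simp only [Finsupp.single_apply, cA]
  split_ifs <;> first | contradiction | omega | ring | (subst_vars; push_cast; ring) | (subst_vars; simp; push_cast; try ring)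

lemma brR_s1 (f : V) (k : ℕ) : brR f (Finsupp.single 1 1) k = if 3 ≤ k then f k else 0 := by
  rw [brR_apply]
  simp only [Finsupp.single_apply, cA]
  split_ifs <;> first | contradiction | omega | ring | (subst_vars; push_cast; ring) | (subst_vars; simp; push_cast; try ring)

lemma brR_s2 (f : V) (k : ℕ) : brR f (Finsupp.single 2 1) k =
    (if 4 ≤ k then f (k-1) else 0) - (if k = 2 then f 0 else 0) := by
  rw [brR_apply]
  simp only [Finsupp.single_apply, cA]
  split_ifs <;> first | contradiction | omega | ring | (subst_vars; push_cast; ring) | (subst_vars; simp; push_cast; try ring)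

lemma brR_sn {n : ℕ} (hn : 3 ≤ n) (f : V) (k : ℕ) : brR f (Finsupp.single n 1) k =
    -(if k = n+1 then f 2 else 0) - (if k = n then ((n:ℂ)-2) * f 0 + f 1 else 0) := by
  have h0 : (Finsupp.single n (1:ℂ)) 0 = 0 := by rw [Finsupp.single_apply, if_neg (by omega)]
  have h1 : (Finsupp.single n (1:ℂ)) 1 = 0 := by rw [Finsupp.single_apply, if_neg (by omega)]
  have h2 : (Finsupp.single n (1:ℂ)) 2 = 0 := by rw [Finsupp.single_apply, if_neg (by omega)]
  unfold brR
  rw [T_single, A_single, B_single, if_pos hn, if_pos hn, h0, h1, h2, cA_ge hn]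
  simp only [zero_smul, sub_zero, add_zero, zero_add, zero_sub, Finsupp.neg_apply,
    Finsupp.sub_apply, Finsupp.add_apply, Finsupp.smul_apply, smul_eq_mul,
    Finsupp.single_apply]
  split_ifs <;> first | contradiction | omega | ring

lemma brR_add_right (f g h : V) : brR f (g + h) = brR f g + brR f h := by
  ext k
  simp only [brR_apply, Finsupp.add_apply]
  split_ifs <;> ring

lemma brR_smul_right (f : V) (c : ℂ) (g : V) : brR f (c • g) = c • brR f g := by
  ext k
  simp only [brR_apply, Finsupp.smul_apply, smul_eq_mul]
  split_ifs <;> ring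

lemma brR_zero_right (f : V) : brR f 0 = 0 := by
  ext k
  simp only [brR_apply, Finsupp.coe_zero, Pi.zero_apply]
  split_ifs <;> ring

-- bracket values on basis elements
lemma brv01 : brR (Finsupp.single 0 1) (Finsupp.single 1 1) = 0 := by
  ext k; rw [brR_s1]
  simp only [Finsupp.single_apply, Finsupp.coe_zero, Pi.zero_apply]
  split_ifs <;> first | rfl | omega

lemma brv20 : brR (Finsupp.single 2 1) (Finsupp.single 0 1) = Finsupp.single 2 1 := by
  ext k; rw [brR_s0]
  simp only [Finsupp.single_apply]
  split_ifs with h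
  · subst h; simp
  · ring

lemma brv21 : brR (Finsupp.single 2 1) (Finsupp.single 1 1) = 0 := by
  ext k; rw [brR_s1]
  simp only [Finsupp.single_apply, Finsupp.coe_zero, Pi.zero_apply]
  split_ifs <;> first | rfl | omega

lemma brvn0 {n : ℕ} (hn : 3 ≤ n) :
    brR (Finsupp.single n 1) (Finsupp.single 0 1) = ((n:ℂ) - 2) • Finsupp.single n 1 := by
  ext k; rw [brR_s0]
  simp only [Finsupp.single_apply, Finsupp.smul_apply, smul_eq_mul]
  split_ifs with h
  · subst h; rw [cA_ge hn]
  · ring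

lemma brvn1 {n : ℕ} (hn : 3 ≤ n) :
    brR (Finsupp.single n 1) (Finsupp.single 1 1) = Finsupp.single n 1 := by
  ext k; rw [brR_s1]
  simp only [Finsupp.single_apply]
  split_ifs <;> first | rfl | omega

lemma brvn2 {n : ℕ} (hn : 3 ≤ n) :
    brR (Finsupp.single n 1) (Finsupp.single 2 1) = Finsupp.single (n+1) 1 := by
  ext k; rw [brR_s2]
  simp only [Finsupp.single_apply]
  split_ifs <;> first | rfl | omega | (exfalso; omega) | simp

-- Part 1
lemma center_trivial : ∀ z : V, (∀ w : V, brR z w = 0) → z = 0 := by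
  intro z hz
  have hk2 : ∀ k, 2 ≤ k → z k = 0 := by
    intro k hk
    have h := DFunLike.congr_fun (hz (Finsupp.single 0 1)) k
    simp only [brR_s0, Finsupp.coe_zero, Pi.zero_apply] at h
    exact (mul_eq_zero.mp h).resolve_left (cA_ne hk)
  have h0 : z 0 = 0 := by
    have h := DFunLike.congr_fun (hz (Finsupp.single 2 1)) 2
    simp only [brR_s2] at h
    simp at h
    exact h
  have h1 : z 1 = 0 := by
    have h := DFunLike.congr_fun (hz (Finsupp.single 3 1)) 3
    rw [brR_sn (le_refl 3)] at h
    simp [h0, hk2 2 le_rfl] at h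
    exact h
  ext k
  rcases Nat.lt_or_ge k 2 with h | h
  · interval_cases k
    · exact h0
    · exact h1
  · exact hk2 k h

def M : V →ₗ[ℂ] V :=
  Finsupp.lsum ℂ fun n => if 3 ≤ n then (((n:ℂ)-2)⁻¹ • Finsupp.lsingle n : ℂ →ₗ[ℂ] V) else 0

lemma M_single (n : ℕ) (c : ℂ) :
    M (Finsupp.single n c) = if 3 ≤ n then Finsupp.single n (((n:ℂ)-2)⁻¹ * c) else 0 := by
  simp only [M, Finsupp.lsum_single]
  split <;> simp [Finsupp.smul_single]

lemma M_apply (g : V) (k : ℕ) : M g k = if 3 ≤ k then ((k:ℂ)-2)⁻¹ * g k else 0 := by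
  induction g using Finsupp.induction_linear with
  | zero => simp
  | add f g hf hg => simp [hf, hg]; split <;> ring
  | single n c =>
    rw [M_single]
    rcases le_or_gt 3 n with h | h
    · rw [if_pos h]
      simp only [Finsupp.single_apply]
      split_ifs <;> first | rfl | omega | (subst_vars; simp) | (exfalso; omega)
    · rw [if_neg (by omega)]
      simp only [Finsupp.coe_zero, Pi.zero_apply, Finsupp.single_apply]
      split_ifs <;> first | rfl | omega | (subst_vars; simp) | (exfalso; omega)

lemma natcast_sub_two_ne {k : ℕ} (h : 3 ≤ k) : (k:ℂ) - 2 ≠ 0 := by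
  have : (k:ℂ) ≠ 2 := by exact_mod_cast (by omega : k ≠ 2)
  exact sub_ne_zero_of_ne this

lemma derivation_inner (d : V →ₗ[ℂ] V)
    (hd : ∀ u v : V, d (brR u v) = brR (d u) v + brR u (d v)) :
    ∃ a : V, ∀ v : V, d v = brR a v := by
  -- constraint equations in coordinates
  have F1 : ∀ k : ℕ, (0:ℂ) =
      (if 3 ≤ k then d (Finsupp.single 0 1) k else 0) + -(cA k * d (Finsupp.single 1 1) k) := by
    intro k
    have h := hd (Finsupp.single 0 1) (Finsupp.single 1 1)
    rw [brv01, map_zero, brR_antisymm (Finsupp.single 0 1)] at h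
    have h2 := DFunLike.congr_fun h k
    rwa [Finsupp.coe_zero, Pi.zero_apply, Finsupp.add_apply, Finsupp.neg_apply,
      brR_s1, brR_s0] at h2
  have F2 : ∀ k : ℕ, d (Finsupp.single 2 1) k =
      cA k * d (Finsupp.single 2 1) k +
      -((if 4 ≤ k then d (Finsupp.single 0 1) (k-1) else 0)
        - (if k = 2 then d (Finsupp.single 0 1) 0 else 0)) := by
    intro k
    have h := hd (Finsupp.single 2 1) (Finsupp.single 0 1)
    rw [brv20, brR_antisymm (Finsupp.single 2 1) (d (Finsupp.single 0 1))] at h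
    have h2 := DFunLike.congr_fun h k
    rwa [Finsupp.add_apply, Finsupp.neg_apply, brR_s0, brR_s2] at h2
  have F3 : ∀ k : ℕ, (0:ℂ) =
      (if 3 ≤ k then d (Finsupp.single 2 1) k else 0) +
      -((if 4 ≤ k then d (Finsupp.single 1 1) (k-1) else 0)
        - (if k = 2 then d (Finsupp.single 1 1) 0 else 0)) := by
    intro k
    have h := hd (Finsupp.single 2 1) (Finsupp.single 1 1)
    rw [brv21, map_zero, brR_antisymm (Finsupp.single 2 1) (d (Finsupp.single 1 1))] at h
    have h2 := DFunLike.congr_fun h k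
    rwa [Finsupp.coe_zero, Pi.zero_apply, Finsupp.add_apply, Finsupp.neg_apply,
      brR_s1, brR_s2] at h2
  have F4 : ∀ n : ℕ, 3 ≤ n → ∀ k : ℕ, ((n:ℂ) - 2) * d (Finsupp.single n 1) k =
      cA k * d (Finsupp.single n 1) k +
      -(-(if k = n+1 then d (Finsupp.single 0 1) 2 else 0)
        - (if k = n then ((n:ℂ)-2) * d (Finsupp.single 0 1) 0 + d (Finsupp.single 0 1) 1 else 0)) := by
    intro n hn k
    have h := hd (Finsupp.single n 1) (Finsupp.single 0 1)
    rw [brvn0 hn, map_smul, brR_antisymm (Finsupp.single n 1) (d (Finsupp.single 0 1))] at h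
    have h2 := DFunLike.congr_fun h k
    rwa [Finsupp.smul_apply, smul_eq_mul, Finsupp.add_apply, Finsupp.neg_apply,
      brR_s0, brR_sn hn] at h2
  have F5 : ∀ n : ℕ, 3 ≤ n → ∀ k : ℕ, d (Finsupp.single n 1) k =
      (if 3 ≤ k then d (Finsupp.single n 1) k else 0) +
      -(-(if k = n+1 then d (Finsupp.single 1 1) 2 else 0)
        - (if k = n then ((n:ℂ)-2) * d (Finsupp.single 1 1) 0 + d (Finsupp.single 1 1) 1 else 0)) := by
    intro n hn k
    have h := hd (Finsupp.single n 1) (Finsupp.single 1 1)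
    rw [brvn1 hn, brR_antisymm (Finsupp.single n 1) (d (Finsupp.single 1 1))] at h
    have h2 := DFunLike.congr_fun h k
    rwa [Finsupp.add_apply, Finsupp.neg_apply, brR_s1, brR_sn hn] at h2
  have F6 : ∀ n : ℕ, 3 ≤ n → ∀ k : ℕ, d (Finsupp.single (n+1) 1) k =
      ((if 4 ≤ k then d (Finsupp.single n 1) (k-1) else 0)
        - (if k = 2 then d (Finsupp.single n 1) 0 else 0)) +
      -(-(if k = n+1 then d (Finsupp.single 2 1) 2 else 0)
        - (if k = n then ((n:ℂ)-2) * d (Finsupp.single 2 1) 0 + d (Finsupp.single 2 1) 1 else 0)) := by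
    intro n hn k
    have h := hd (Finsupp.single n 1) (Finsupp.single 2 1)
    rw [brvn2 hn, brR_antisymm (Finsupp.single n 1) (d (Finsupp.single 2 1))] at h
    have h2 := DFunLike.congr_fun h k
    rwa [Finsupp.add_apply, Finsupp.neg_apply, brR_s2, brR_sn hn] at h2
  -- derived scalar facts
  have hX0 : d (Finsupp.single 0 1) 0 = 0 := by
    have h := F2 2
    rw [if_neg (by omega), if_pos rfl, cA_2] at h
    first | linear_combination h | linear_combination -h
  have hY0 : d (Finsupp.single 1 1) 0 = 0 := by
    have h := F3 2
    rw [if_neg (by omega), if_neg (by omega), if_pos rfl] at h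
    first | linear_combination h | linear_combination -h
  have hX1 : d (Finsupp.single 0 1) 1 = 0 := by
    have h := F4 3 le_rfl 3
    rw [if_neg (by omega), if_pos rfl, cA_ge le_rfl, hX0] at h
    push_cast at h
    first | linear_combination h | linear_combination -h
  have hY1 : d (Finsupp.single 1 1) 1 = 0 := by
    have h := F5 3 le_rfl 3
    rw [if_pos le_rfl, if_neg (by omega), if_pos rfl, hY0] at h
    push_cast at h
    first | linear_combination h | linear_combination -h
  have hY2 : d (Finsupp.single 1 1) 2 = 0 := by
    have h := F1 2
    rw [if_neg (by omega), cA_2] at h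
    first | linear_combination h | linear_combination -h
  have hXY : ∀ k, 3 ≤ k →
      d (Finsupp.single 0 1) k = ((k:ℂ)-2) * d (Finsupp.single 1 1) k := by
    intro k hk
    have h := F1 k
    rw [if_pos hk, cA_ge hk] at h
    first | linear_combination h | linear_combination -h
  have hD2_0 : d (Finsupp.single 2 1) 0 = 0 := by
    have h := F2 0
    rw [if_neg (by omega), if_neg (by omega), cA_0] at h
    first | linear_combination h | linear_combination -h
  have hD2_1 : d (Finsupp.single 2 1) 1 = 0 := by
    have h := F2 1
    rw [if_neg (by omega), if_neg (by omega), cA_1] at h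
    first | linear_combination h | linear_combination -h
  have hD2_3 : d (Finsupp.single 2 1) 3 = 0 := by
    have h := F3 3
    rw [if_pos (by omega : (3:ℕ) ≤ 3), if_neg (by omega), if_neg (by omega)] at h
    first | linear_combination h | linear_combination -h
  have hD2 : ∀ k, 4 ≤ k → d (Finsupp.single 2 1) k = d (Finsupp.single 1 1) (k-1) := by
    intro k hk
    have h := F3 k
    rw [if_pos (by omega : 3 ≤ k), if_pos hk, if_neg (by omega)] at h
    first | linear_combination h | linear_combination -h
  have hDn0 : ∀ n, 3 ≤ n → d (Finsupp.single n 1) 0 = 0 := by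
    intro n hn
    have h := F4 n hn 0
    rw [if_neg (by omega), if_neg (by omega), cA_0] at h
    have h2 : ((n:ℂ)-2) * d (Finsupp.single n 1) 0 = 0 := by linear_combination h
    exact (mul_eq_zero.mp h2).resolve_left (natcast_sub_two_ne hn)
  have hDn1 : ∀ n, 3 ≤ n → d (Finsupp.single n 1) 1 = 0 := by
    intro n hn
    have h := F4 n hn 1
    rw [if_neg (by omega), if_neg (by omega), cA_1] at h
    have h2 : ((n:ℂ)-2) * d (Finsupp.single n 1) 1 = 0 := by linear_combination h
    exact (mul_eq_zero.mp h2).resolve_left (natcast_sub_two_ne hn)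
  have hDn2 : ∀ n, 3 ≤ n → d (Finsupp.single n 1) 2 = 0 := by
    intro n hn
    have h := F5 n hn 2
    rw [if_neg (by omega), if_neg (by omega), if_neg (by omega)] at h
    first | linear_combination h | linear_combination -h
  have hDnk : ∀ n, 3 ≤ n → ∀ k, 3 ≤ k → k ≠ n → k ≠ n + 1 →
      d (Finsupp.single n 1) k = 0 := by
    intro n hn k hk hkn hkn1
    have h := F4 n hn k
    rw [if_neg hkn1, if_neg hkn, cA_ge hk] at h
    have h2 : ((n:ℂ) - (k:ℂ)) * d (Finsupp.single n 1) k = 0 := by linear_combination h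
    rcases mul_eq_zero.mp h2 with h3 | h3
    · exact absurd (Nat.cast_inj.mp (sub_eq_zero.mp h3)) (fun hh => hkn hh.symm)
    · exact h3
  have hDntop : ∀ n, 3 ≤ n → d (Finsupp.single n 1) (n+1) = -(d (Finsupp.single 0 1) 2) := by
    intro n hn
    have h := F4 n hn (n+1)
    rw [if_pos rfl, if_neg (by omega), cA_ge (by omega)] at h
    push_cast at h
    first | linear_combination h | linear_combination -h
  have hdiag : ∀ n, 3 ≤ n → ∀ hn : 3 ≤ n, d (Finsupp.single n 1) n =
      d (Finsupp.single 3 1) 3 + ((n:ℂ)-3) * d (Finsupp.single 2 1) 2 := by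
    intro n hn _
    induction n, hn using Nat.le_induction with
    | base => push_cast; ring
    | succ n hn ih =>
      have h := F6 n hn (n+1)
      rw [if_pos (by omega), if_neg (by omega), if_pos rfl, if_neg (by omega)] at h
      simp only [Nat.add_sub_cancel] at h
      have ih2 := ih hn
      push_cast at h ih2 ⊢
      linear_combination h + ih2
  -- the inner element
  refine ⟨(-(d (Finsupp.single 2 1) 2)) • Finsupp.single 0 1
      + (d (Finsupp.single 2 1) 2 - d (Finsupp.single 3 1) 3) • Finsupp.single 1 1
      + d (Finsupp.single 0 1) 2 • Finsupp.single 2 1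
      + M (d (Finsupp.single 0 1)), ?_⟩
  set a : V := (-(d (Finsupp.single 2 1) 2)) • Finsupp.single 0 1
      + (d (Finsupp.single 2 1) 2 - d (Finsupp.single 3 1) 3) • Finsupp.single 1 1
      + d (Finsupp.single 0 1) 2 • Finsupp.single 2 1
      + M (d (Finsupp.single 0 1)) with ha
  have ha0 : a 0 = -(d (Finsupp.single 2 1) 2) := by
    rw [ha]; simp [M_apply, Finsupp.single_apply]
  have ha1 : a 1 = d (Finsupp.single 2 1) 2 - d (Finsupp.single 3 1) 3 := by
    rw [ha]; simp [M_apply, Finsupp.single_apply]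
  have ha2 : a 2 = d (Finsupp.single 0 1) 2 := by
    rw [ha]; simp [M_apply, Finsupp.single_apply]
  have hak : ∀ k, 3 ≤ k → a k = ((k:ℂ)-2)⁻¹ * d (Finsupp.single 0 1) k := by
    intro k hk
    rw [ha]
    simp only [Finsupp.add_apply, Finsupp.smul_apply, smul_eq_mul, Finsupp.single_apply,
      M_apply, if_pos hk, if_neg (by omega : ¬ (0:ℕ) = k), if_neg (by omega : ¬ (1:ℕ) = k),
      if_neg (by omega : ¬ (2:ℕ) = k)]
    ring
  -- d agrees with brR a on basis vectors
  have hbase : ∀ n : ℕ, d (Finsupp.single n 1) = brR a (Finsupp.single n 1) := by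
    intro n
    rcases Nat.lt_or_ge n 3 with hn | hn
    · interval_cases n
      · -- n = 0
        ext k
        rw [brR_s0]
        rcases Nat.lt_or_ge k 3 with hk | hk
        · interval_cases k
          · rw [cA_0, zero_mul, hX0]
          · rw [cA_1, zero_mul, hX1]
          · rw [cA_2, one_mul, ha2]
        · rw [cA_ge hk, hak k hk, ← mul_assoc,
            mul_inv_cancel₀ (natcast_sub_two_ne hk), one_mul]
      · -- n = 1
        ext k
        rw [brR_s1]
        rcases Nat.lt_or_ge k 3 with hk | hk
        · interval_cases k
          · rw [if_neg (by omega), hY0]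
          · rw [if_neg (by omega), hY1]
          · rw [if_neg (by omega), hY2]
        · rw [if_pos hk, hak k hk, hXY k hk, ← mul_assoc,
            inv_mul_cancel₀ (natcast_sub_two_ne hk), one_mul]
      · -- n = 2
        ext k
        rw [brR_s2]
        rcases Nat.lt_or_ge k 4 with hk | hk
        · interval_cases k
          · rw [if_neg (by omega), if_neg (by omega), hD2_0]; ring
          · rw [if_neg (by omega), if_neg (by omega), hD2_1]; ring
          · rw [if_neg (by omega), if_pos rfl, ha0]; ring
          · rw [if_neg (by omega), if_neg (by omega), hD2_3]; ring
        · have h3 : (3:ℕ) ≤ k - 1 := by omega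
          rw [if_pos hk, if_neg (by omega), hD2 k hk, hak (k-1) h3, hXY (k-1) h3,
            ← mul_assoc, inv_mul_cancel₀ (natcast_sub_two_ne h3), one_mul, sub_zero]
    · -- n ≥ 3
      ext k
      rw [brR_sn hn]
      rcases eq_or_ne k (n+1) with hk | hk
      · subst hk
        rw [if_pos rfl, if_neg (by omega), ha2, hDntop n hn]
        ring
      · rcases eq_or_ne k n with hk2 | hk2
        · subst hk2
          rw [if_neg (by omega), if_pos rfl, ha0, ha1, hdiag k hn hn]
          ring
        · rw [if_neg hk, if_neg hk2]
          rcases Nat.lt_or_ge k 3 with hk3 | hk3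
          · interval_cases k
            · rw [hDn0 n hn]; ring
            · rw [hDn1 n hn]; ring
            · rw [hDn2 n hn]; ring
          · rw [hDnk n hn k hk3 hk2 hk]; ring
  -- conclude by linearity
  intro v
  induction v using Finsupp.induction_linear with
  | zero => rw [map_zero, brR_zero_right]
  | add f g hf hg => rw [map_add, brR_add_right, hf, hg]
  | single n c =>
    have hs : Finsupp.single n c = c • Finsupp.single n (1:ℂ) := by
      rw [Finsupp.smul_single, smul_eq_mul, mul_one]
    rw [hs, map_smul, brR_smul_right, hbase n]

/-- `R(m₀,2,0)` has trivial center and all its derivations are inner. -/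
theorem stmt16 :
    (∀ z : V, (∀ w : V, brR z w = 0) → z = 0) ∧
    (∀ d : V →ₗ[ℂ] V, (∀ u v : V, d (brR u v) = brR (d u) v + brR u (d v)) →
      ∃ a : V, ∀ v : V, d v = brR a v) :=
  ⟨center_trivial, derivation_inner⟩
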